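/- Let f = Σ_{n≥0} aₙxⁿ be a convergent real formal power series and let u, b ∈ ℝ. If the improper Newton integral ∫_u^{+∞} f(x+b) exists (i.e., the Newton integral ∫_u^{w} f(x+b) tends to a finite limit L as w → +∞), then the improper Newton integral ∫_{u+b}^{+∞} f also exists and equals L; and conversely, if ∫_{u+b}^{+∞} f exists then ∫_u^{+∞} f(x+b) exists and the two are equal. -/

import Mathlib

open Filter Finset

section Aux

variable {a : ℕ → ℝ}

private lemma aux_abs_summable
    (hconv : ∀ c : ℝ, Filter.Tendsto (fun n : ℕ => a n * c ^ n) Filter.atTop (nhds 0))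
    {r : ℝ} (hr : 0 ≤ r) : Summable (fun n => |a n| * r ^ n) := by
  obtain ⟨C, hC⟩ : BddAbove (Set.range fun n : ℕ => |a n * (2 * r) ^ n|) :=
    ((hconv (2 * r)).abs.congr' (by simp)).bddAbove_range
  refine Summable.of_nonneg_of_le (fun n => by positivity) (fun n => ?_)
    (((summable_geometric_of_lt_one (by norm_num) (by norm_num : (1:ℝ)/2 < 1))).mul_left C)
  have h1 : |a n * (2 * r) ^ n| ≤ C := hC ⟨n, rfl⟩
  have h2 : |a n| * r ^ n = |a n * (2 * r) ^ n| * (1 / 2) ^ n := by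
    rw [abs_mul, abs_pow, abs_of_nonneg (by positivity : (0:ℝ) ≤ 2 * r), mul_assoc,
      ← mul_pow]
    have : 2 * r * (1 / 2) = r := by ring
    rw [this]
  rw [h2]
  exact mul_le_mul_of_nonneg_right h1 (by positivity)

private noncomputable def auxF (a : ℕ → ℝ) (b v : ℝ) : ℕ × ℕ → ℝ := fun p =>
  ((p.2 + p.1).choose p.1 : ℝ) * a (p.2 + p.1) * b ^ p.2 * v ^ (p.1 + 1) / ((p.1 : ℝ) + 1)

private lemma aux_absF_summable
    (hconv : ∀ c : ℝ, Filter.Tendsto (fun n : ℕ => a n * c ^ n) Filter.atTop (nhds 0))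
    (b v : ℝ) : Summable (fun p : ℕ × ℕ => |auxF a b v p|) := by
  have key : Summable (fun x : Σ n : ℕ, Finset.HasAntidiagonal.antidiagonal n => |auxF a b v x.2|) := by
    rw [summable_sigma_of_nonneg (fun _ => abs_nonneg _)]
    refine ⟨fun k => (hasSum_fintype _).summable, ?_⟩
    refine Summable.of_nonneg_of_le (fun k => tsum_nonneg fun _ => abs_nonneg _)
      (fun k => ?_)
      ((aux_abs_summable hconv (by positivity : (0:ℝ) ≤ |v| + |b|)).mul_right |v|)
    rw [tsum_fintype]
    show ∑ y : {x // x ∈ Finset.HasAntidiagonal.antidiagonal k}, |auxF a b v ↑y| ≤ _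
    rw [Finset.univ_eq_attach, Finset.sum_attach (Finset.HasAntidiagonal.antidiagonal k)
      (fun p => |auxF a b v p|)]
    calc ∑ p ∈ Finset.HasAntidiagonal.antidiagonal k, |auxF a b v p|
        ≤ ∑ p ∈ Finset.HasAntidiagonal.antidiagonal k,
            |a k| * |v| * ((k.choose p.1 : ℝ) * |v| ^ p.1 * |b| ^ p.2) := by
          refine Finset.sum_le_sum fun p hp => ?_
          have hk : p.2 + p.1 = k := by
            rw [add_comm]; exact Finset.HasAntidiagonal.mem_antidiagonal.mp hp
          have h1 : |auxF a b v p|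
              = (k.choose p.1 : ℝ) * |a k| * |b| ^ p.2 * |v| ^ (p.1 + 1) / ((p.1:ℝ) + 1) := by
            rw [auxF, hk, abs_div, abs_mul, abs_mul, abs_mul, abs_pow, abs_pow, Nat.abs_cast,
              abs_of_pos (by positivity : (0:ℝ) < (p.1:ℝ) + 1)]
          rw [h1]
          calc (k.choose p.1 : ℝ) * |a k| * |b| ^ p.2 * |v| ^ (p.1 + 1) / ((p.1:ℝ) + 1)
              ≤ (k.choose p.1 : ℝ) * |a k| * |b| ^ p.2 * |v| ^ (p.1 + 1) :=
                div_le_self (by positivity) (by simp)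
            _ = |a k| * |v| * ((k.choose p.1 : ℝ) * |v| ^ p.1 * |b| ^ p.2) := by
                rw [pow_succ]; ring
      _ = |a k| * (|v| + |b|) ^ k * |v| := by
          rw [← Finset.mul_sum, Finset.Nat.sum_antidiagonal_eq_sum_range_succ_mk, add_pow]
          rw [show ∑ i ∈ Finset.range (k + 1), |v| ^ i * |b| ^ (k - i) * (k.choose i : ℝ)
              = ∑ i ∈ Finset.range (k + 1), (k.choose i : ℝ) * |v| ^ i * |b| ^ (k - i) from
            Finset.sum_congr rfl fun i _ => by ring]
          ring
  exact Finset.HasAntidiagonal.sigmaAntidiagonalEquivProd.summable_iff.mp key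

private lemma aux_key
    (hconv : ∀ c : ℝ, Filter.Tendsto (fun n : ℕ => a n * c ^ n) Filter.atTop (nhds 0))
    (b v : ℝ) :
    ∑' n : ℕ, (∑' m : ℕ, ((m + n).choose n : ℝ) * a (m + n) * b ^ m) * v ^ (n + 1) / ((n : ℝ) + 1)
      = ∑' k : ℕ, a k * ((v + b) ^ (k + 1) - b ^ (k + 1)) / ((k : ℝ) + 1) := by
  have hFa := aux_absF_summable hconv b v
  have hF : Summable (auxF a b v) := summable_abs_iff.mp hFa
  have hrow : ∀ n : ℕ,
      (∑' m : ℕ, ((m + n).choose n : ℝ) * a (m + n) * b ^ m) * v ^ (n + 1) / ((n : ℝ) + 1)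
        = ∑' m : ℕ, auxF a b v (n, m) := by
    intro n
    rw [mul_div_assoc, ← tsum_mul_right]
    exact tsum_congr fun m => (mul_div_assoc _ _ _).symm
  calc ∑' n : ℕ, (∑' m : ℕ, ((m + n).choose n : ℝ) * a (m + n) * b ^ m) * v ^ (n + 1) /
          ((n : ℝ) + 1)
      = ∑' (n : ℕ) (m : ℕ), auxF a b v (n, m) := tsum_congr hrow
    _ = ∑' p : ℕ × ℕ, auxF a b v p := (hF.tsum_prod' fun n => hF.prod_factor n).symm
    _ = ∑' x : Σ k : ℕ, Finset.HasAntidiagonal.antidiagonal k, auxF a b v x.2 :=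
        (Finset.HasAntidiagonal.sigmaAntidiagonalEquivProd.tsum_eq (auxF a b v)).symm
    _ = ∑' (k : ℕ) (y : Finset.HasAntidiagonal.antidiagonal k), auxF a b v y :=
        Summable.tsum_sigma' (fun k => (hasSum_fintype _).summable)
          (Finset.HasAntidiagonal.sigmaAntidiagonalEquivProd.summable_iff.mpr hF)
    _ = ∑' k : ℕ, a k * ((v + b) ^ (k + 1) - b ^ (k + 1)) / ((k : ℝ) + 1) := by
        refine tsum_congr fun k => ?_
        rw [tsum_fintype]
        show ∑ y : {x // x ∈ Finset.HasAntidiagonal.antidiagonal k}, auxF a b v ↑y = _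
        rw [Finset.univ_eq_attach, Finset.sum_attach (Finset.HasAntidiagonal.antidiagonal k)
          (fun p => auxF a b v p), Finset.Nat.sum_antidiagonal_eq_sum_range_succ_mk]
        have hk1 : ((k:ℝ) + 1) ≠ 0 := by positivity
        rw [eq_div_iff hk1, Finset.sum_mul]
        have hterm : ∀ n ∈ Finset.range (k + 1),
            auxF a b v (n, k - n) * ((k:ℝ) + 1)
              = a k * (((k+1).choose (n+1) : ℝ) * v ^ (n+1) * b ^ (k - n)) := by
          intro n hn
          have hle : n ≤ k := Nat.lt_succ_iff.mp (Finset.mem_range.mp hn)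
          have hkn : k - n + n = k := Nat.sub_add_cancel hle
          have hc : ((k:ℝ) + 1) * (k.choose n : ℝ) = ((k+1).choose (n+1) : ℝ) * ((n:ℝ) + 1) := by
            exact_mod_cast Nat.add_one_mul_choose_eq k n
          have hn1 : ((n:ℝ) + 1) ≠ 0 := by positivity
          rw [auxF]
          simp only [hkn]
          field_simp
          linear_combination (a k * b ^ (k - n) * v ^ (n + 1)) * hc
        have hrhs : a k * ((v + b) ^ (k + 1) - b ^ (k + 1))
            = ∑ n ∈ Finset.range (k + 1),
                a k * (((k+1).choose (n+1) : ℝ) * v ^ (n+1) * b ^ (k - n)) := by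
          rw [add_pow, Finset.sum_range_succ']
          simp only [pow_zero, one_mul, Nat.choose_zero_right, Nat.cast_one, mul_one,
            Nat.sub_zero]
          rw [add_sub_cancel_right, Finset.mul_sum]
          refine Finset.sum_congr rfl fun n _ => ?_
          rw [Nat.succ_sub_succ]
          ring
        rw [Finset.sum_congr rfl hterm, hrhs]

private lemma aux_row_summable
    (hconv : ∀ c : ℝ, Filter.Tendsto (fun n : ℕ => a n * c ^ n) Filter.atTop (nhds 0))
    (b v : ℝ) :
    Summable (fun n : ℕ =>
      (∑' m : ℕ, ((m + n).choose n : ℝ) * a (m + n) * b ^ m) * v ^ (n + 1) / ((n : ℝ) + 1)) := by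
  have hFa := aux_absF_summable hconv b v
  have hF : Summable (auxF a b v) := summable_abs_iff.mp hFa
  have hrow : ∀ n : ℕ,
      (∑' m : ℕ, ((m + n).choose n : ℝ) * a (m + n) * b ^ m) * v ^ (n + 1) / ((n : ℝ) + 1)
        = ∑' m : ℕ, auxF a b v (n, m) := by
    intro n
    rw [mul_div_assoc, ← tsum_mul_right]
    exact tsum_congr fun m => (mul_div_assoc _ _ _).symm
  exact (hF.prod).congr fun n => (hrow n).symm

private lemma aux_S_summable
    (hconv : ∀ c : ℝ, Filter.Tendsto (fun n : ℕ => a n * c ^ n) Filter.atTop (nhds 0))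
    (x : ℝ) : Summable (fun n : ℕ => a n * x ^ (n + 1) / ((n : ℝ) + 1)) := by
  refine Summable.of_norm_bounded
    ((aux_abs_summable hconv (abs_nonneg x)).mul_right |x|) fun n => ?_
  have h1 : ‖a n * x ^ (n + 1) / ((n : ℝ) + 1)‖
      = |a n| * |x| ^ (n + 1) / ((n : ℝ) + 1) := by
    rw [Real.norm_eq_abs, abs_div, abs_mul, abs_pow,
      abs_of_pos (by positivity : (0:ℝ) < (n:ℝ) + 1)]
  rw [h1]
  calc |a n| * |x| ^ (n + 1) / ((n : ℝ) + 1) ≤ |a n| * |x| ^ (n + 1) :=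
        div_le_self (by positivity) (by simp)
    _ = |a n| * |x| ^ n * |x| := by rw [pow_succ]; ring

end Aux

/-- For convergent `f = Σ aₙxⁿ` and `u, b ∈ ℝ`, the improper Newton integral
`∫_u^{+∞} f(x+b)` exists with value `L` if and only if the improper Newton
integral `∫_{u+b}^{+∞} f` exists with value `L`. Here the shift `f(x+b)` has
coefficients `cₙ = Σ_{m≥n} C(m,n)·aₘ·b^{m−n}`, and a Newton integral from `u`
to `w` is the difference of the values of the formal primitive at `w` and `u`. -/
theorem improper_newton_integral_shift (a : ℕ → ℝ)
    (hconv : ∀ c : ℝ, Filter.Tendsto (fun n : ℕ => a n * c ^ n) Filter.atTop (nhds 0))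
    (u b : ℝ) :
    ∀ L : ℝ,
      Filter.Tendsto
        (fun w : ℝ => ∑' n : ℕ, (∑' m : ℕ, ((m + n).choose n : ℝ) * a (m + n) * b ^ m) *
          (w ^ (n + 1) - u ^ (n + 1)) / ((n : ℝ) + 1))
        Filter.atTop (nhds L)
      ↔ Filter.Tendsto
          (fun w : ℝ => ∑' n : ℕ, a n * (w ^ (n + 1) - (u + b) ^ (n + 1)) / ((n : ℝ) + 1))
          Filter.atTop (nhds L) := by
  intro L
  set S : ℝ → ℝ := fun x => ∑' n : ℕ, a n * x ^ (n + 1) / ((n : ℝ) + 1) with hS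
  -- the "key" evaluation of the shifted primitive
  have hG : ∀ v : ℝ,
      ∑' n : ℕ, (∑' m : ℕ, ((m + n).choose n : ℝ) * a (m + n) * b ^ m) * v ^ (n + 1) /
        ((n : ℝ) + 1) = S (v + b) - S b := by
    intro v
    rw [aux_key hconv b v]
    have : ∀ k : ℕ, a k * ((v + b) ^ (k + 1) - b ^ (k + 1)) / ((k : ℝ) + 1)
        = a k * (v + b) ^ (k + 1) / ((k : ℝ) + 1) - a k * b ^ (k + 1) / ((k : ℝ) + 1) := by
      intro k; ring
    rw [tsum_congr this, Summable.tsum_sub (aux_S_summable hconv (v + b)) (aux_S_summable hconv b)]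
  -- rewrite LHS function
  have hLfun : (fun w : ℝ => ∑' n : ℕ, (∑' m : ℕ, ((m + n).choose n : ℝ) * a (m + n) * b ^ m) *
      (w ^ (n + 1) - u ^ (n + 1)) / ((n : ℝ) + 1)) = fun w => S (w + b) - S (u + b) := by
    funext w
    have h1 : ∀ n : ℕ, (∑' m : ℕ, ((m + n).choose n : ℝ) * a (m + n) * b ^ m) *
        (w ^ (n + 1) - u ^ (n + 1)) / ((n : ℝ) + 1)
        = (∑' m : ℕ, ((m + n).choose n : ℝ) * a (m + n) * b ^ m) * w ^ (n + 1) / ((n : ℝ) + 1)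
          - (∑' m : ℕ, ((m + n).choose n : ℝ) * a (m + n) * b ^ m) * u ^ (n + 1) /
            ((n : ℝ) + 1) := by
      intro n; ring
    rw [tsum_congr h1, Summable.tsum_sub (aux_row_summable hconv b w) (aux_row_summable hconv b u),
      hG w, hG u]
    ring
  have hRfun : (fun w : ℝ => ∑' n : ℕ, a n * (w ^ (n + 1) - (u + b) ^ (n + 1)) / ((n : ℝ) + 1))
      = fun w => S w - S (u + b) := by
    funext w
    have h1 : ∀ n : ℕ, a n * (w ^ (n + 1) - (u + b) ^ (n + 1)) / ((n : ℝ) + 1)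
        = a n * w ^ (n + 1) / ((n : ℝ) + 1) - a n * (u + b) ^ (n + 1) / ((n : ℝ) + 1) := by
      intro n; ring
    rw [tsum_congr h1, Summable.tsum_sub (aux_S_summable hconv w) (aux_S_summable hconv (u + b))]
  rw [hLfun, hRfun]
  constructor
  · intro h
    have h2 := h.comp (tendsto_atTop_add_const_right atTop (-b) tendsto_id)
    refine h2.congr fun w => ?_
    simp only [Function.comp]
    rw [show id w + -b + b = w by simp]
  · intro h
    exact h.comp (tendsto_atTop_add_const_right atTop b tendsto_id)
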